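/- Let T := [T_1 ⋯ T_n] with T_i ∈ B(H) and T' := [T_1' ⋯ T_n'] with T_i' ∈ B(H') be row contractions, and let A ∈ B(H,H') be a contraction satisfying A T_i = T_i' A for all i = 1,…,n. Then for all h_1,…,h_n ∈ H one has ‖∑_{i=1}^n D_A T_i h_i‖² + ‖D_T(h_1 ⊕ ⋯ ⊕ h_n)‖² = ∑_{i=1}^n ‖D_A h_i‖² + ‖D_{T'}(A h_1 ⊕ ⋯ ⊕ A h_n)‖². Consequently, the map W sending ∑ D_A T_i h_i ⊕ D_T(⊕ h_i) to D_{T'}(⊕ A h_i) ⊕ (⊕ D_A h_i) extends to an isometry. -/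

import Mathlib

open scoped InnerProductSpace

set_option synthInstance.maxHeartbeats 1000000

lemma defect_norm_sq {E F : Type*} [NormedAddCommGroup E] [InnerProductSpace ℂ E]
    [CompleteSpace E] [NormedAddCommGroup F] [InnerProductSpace ℂ F] [CompleteSpace F]
    (B : E →L[ℂ] F) (D : E →L[ℂ] E) (hD : IsSelfAdjoint D)
    (h : D ∘L D = 1 - ContinuousLinearMap.adjoint B ∘L B) (x : E) :
    ‖D x‖ ^ 2 = ‖x‖ ^ 2 - ‖B x‖ ^ 2 := by
  have h1 : (⟪D x, D x⟫_ℂ) = ⟪(D ∘L D) x, x⟫_ℂ := by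
    rw [ContinuousLinearMap.comp_apply]
    rw [← ContinuousLinearMap.adjoint_inner_left]
    rw [hD.adjoint_eq]
  have h2 : ⟪(D ∘L D) x, x⟫_ℂ = ⟪x, x⟫_ℂ - ⟪B x, B x⟫_ℂ := by
    rw [h]
    simp [ContinuousLinearMap.sub_apply, inner_sub_left,
      ContinuousLinearMap.adjoint_inner_left]
  have h3 := congrArg (RCLike.re (K := ℂ)) (h1.trans h2)
  simpa [inner_self_eq_norm_sq, map_sub, ← Complex.ofReal_pow] using h3

/-- For row contractions `T = [T_1 ⋯ T_n]` on `H`, `T' = [T_1' ⋯ T_n']` on `H'`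
and a contraction `A : H → H'` intertwining them (`A T_i = T_i' A`), one has, for all
`h_1,…,h_n ∈ H`,
`‖∑ D_A T_i h_i‖² + ‖D_T(⊕ h_i)‖² = ∑ ‖D_A h_i‖² + ‖D_{T'}(⊕ A h_i)‖²`,
where the defect operators are the positive square roots of `I - A*A`, `I - T*T`, `I - T'*T'`
(here hypothesized via their characterizing properties). -/
theorem stmt_4 {H H' : Type*} [NormedAddCommGroup H] [InnerProductSpace ℂ H] [CompleteSpace H]
    [NormedAddCommGroup H'] [InnerProductSpace ℂ H'] [CompleteSpace H'] {n : ℕ}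
    [CompleteSpace (PiLp 2 (fun _ : Fin n => H))] [CompleteSpace (PiLp 2 (fun _ : Fin n => H'))]
    (T : Fin n → H →L[ℂ] H) (T' : Fin n → H' →L[ℂ] H')
    (Trow : PiLp 2 (fun _ : Fin n => H) →L[ℂ] H)
    (hTrow : ∀ h : PiLp 2 (fun _ : Fin n => H), Trow h = ∑ i, T i (h i))
    (T'row : PiLp 2 (fun _ : Fin n => H') →L[ℂ] H')
    (hT'row : ∀ h : PiLp 2 (fun _ : Fin n => H'), T'row h = ∑ i, T' i (h i))
    (hT : ‖Trow‖ ≤ 1) (hT' : ‖T'row‖ ≤ 1)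
    (A : H →L[ℂ] H') (hA : ‖A‖ ≤ 1) (hint : ∀ i, A ∘L T i = T' i ∘L A)
    (DA : H →L[ℂ] H) (hDApos : DA.IsPositive)
    (hDA : DA ∘L DA = 1 - ContinuousLinearMap.adjoint A ∘L A)
    (DT : PiLp 2 (fun _ : Fin n => H) →L[ℂ] PiLp 2 (fun _ : Fin n => H))
    (hDTpos : DT.IsPositive)
    (hDT : DT ∘L DT = 1 - ContinuousLinearMap.adjoint Trow ∘L Trow)
    (DT' : PiLp 2 (fun _ : Fin n => H') →L[ℂ] PiLp 2 (fun _ : Fin n => H'))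
    (hDT'pos : DT'.IsPositive)
    (hDT' : DT' ∘L DT' = 1 - ContinuousLinearMap.adjoint T'row ∘L T'row) :
    ∀ h : PiLp 2 (fun _ : Fin n => H),
      ‖∑ i, DA (T i (h i))‖ ^ 2 + ‖DT h‖ ^ 2
        = (∑ i, ‖DA (h i)‖ ^ 2)
          + ‖DT' ((WithLp.equiv 2 (∀ _ : Fin n, H')).symm fun i => A (h i))‖ ^ 2 := by
  intro h
  set g : PiLp 2 (fun _ : Fin n => H') :=
    (WithLp.equiv 2 (∀ _ : Fin n, H')).symm fun i => A (h i) with hg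
  have hgi : ∀ i, g i = A (h i) := fun i => rfl
  have hsum : ∑ i, DA (T i (h i)) = DA (Trow h) := by
    rw [hTrow, map_sum]
  have hATrow : A (Trow h) = T'row g := by
    rw [hTrow, hT'row, map_sum]
    exact Finset.sum_congr rfl fun i _ => by
      have := ContinuousLinearMap.ext_iff.mp (hint i) (h i)
      simpa [hgi] using this
  have key1 := defect_norm_sq A DA hDApos.isSelfAdjoint hDA (Trow h)
  have key2 := defect_norm_sq Trow DT hDTpos.isSelfAdjoint hDT h
  have key3 := defect_norm_sq T'row DT' hDT'pos.isSelfAdjoint hDT' g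
  have keyi : ∀ i, ‖DA (h i)‖ ^ 2 = ‖h i‖ ^ 2 - ‖A (h i)‖ ^ 2 :=
    fun i => defect_norm_sq A DA hDApos.isSelfAdjoint hDA (h i)
  have hnh : ‖h‖ ^ 2 = ∑ i, ‖h i‖ ^ 2 := by
    have := PiLp.norm_sq_eq_of_L2 (fun _ : Fin n => H) h
    simpa using this
  have hng : ‖g‖ ^ 2 = ∑ i, ‖A (h i)‖ ^ 2 := by
    have := PiLp.norm_sq_eq_of_L2 (fun _ : Fin n => H') g
    simpa [hgi] using this
  rw [hsum, key1, key2, key3, hATrow, hnh, hng,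
    Finset.sum_congr rfl (fun i _ => keyi i), Finset.sum_sub_distrib]
  ring
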